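/- For every natural number ℓ ≥ 0, the summatory function of the periodicity function of the period-doubling word at powers of 2 satisfies P_pd(2^ℓ) = (5/9 + (2/3)ℓ)·2^ℓ + 1/2 − (1/18)(−1)^ℓ. -/

import Mathlib

open Finset Filter Asymptotics

/-- `n` is a local period of the infinite word `w` at position `i`:
`n ≥ 1` and either (`n ≤ i` and `w_{i+k} = w_{i-n+k}` for all `k < n`)
or (`n > i` and `w_k = w_{n+k}` for all `k < i`). -/
def IsLocalPeriodAt {α : Type*} (w : ℕ → α) (i n : ℕ) : Prop :=
  1 ≤ n ∧ ((n ≤ i ∧ ∀ k < n, w (i + k) = w (i - n + k)) ∨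
           (i < n ∧ ∀ k < i, w k = w (n + k)))

/-- The periodicity function `p_w(i)`: the least local period of `w` at `i`. -/
noncomputable def perFn {α : Type*} (w : ℕ → α) (i : ℕ) : ℕ :=
  sInf {n | IsLocalPeriodAt w i n}

/-- The summatory function `P_w(n) = ∑_{j<n} p_w(j)`. -/
noncomputable def sumFn {α : Type*} (w : ℕ → α) (n : ℕ) : ℕ :=
  ∑ j ∈ Finset.range n, perFn w j

/-- The periodic complexity `h_w(n) = P_w(n)/n`. -/
noncomputable def perComplexity {α : Type*} (w : ℕ → α) (n : ℕ) : ℝ :=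
  (sumFn w n : ℝ) / n

/-- The period-doubling word: `pd_i = 1` iff the 2-adic valuation of `i+1` is odd. -/
def pd (i : ℕ) : ℕ :=
  if Odd ((i + 1).factorization 2) then 1 else 0

/-! ### Basic facts about `pd` -/

lemma pd_zero_or_one (i : ℕ) : pd i = 0 ∨ pd i = 1 := by
  unfold pd; split <;> simp

lemma pd_two_mul (k : ℕ) : pd (2 * k) = 0 := by
  unfold pd
  rw [Nat.factorization_eq_zero_of_not_dvd (by omega : ¬ (2 ∣ 2 * k + 1))]
  simp

@[simp] lemma pd_zero : pd 0 = 0 := by simpa using pd_two_mul 0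

lemma pd_odd (k : ℕ) : pd (2 * k + 1) = 1 - pd k := by
  unfold pd
  rw [show 2 * k + 1 + 1 = 2 * (k + 1) by ring,
      Nat.factorization_mul two_ne_zero (Nat.succ_ne_zero k),
      Nat.Prime.factorization Nat.prime_two]
  simp only [Finsupp.add_apply, Finsupp.single_eq_same]
  rcases Nat.even_or_odd ((k + 1).factorization 2) with h | h
  · rw [if_pos (by rw [add_comm]; exact h.add_one), if_neg (by simpa using Nat.not_odd_iff_even.mpr h)]
  · rw [if_neg (by rw [add_comm]; simpa using Nat.not_odd_iff_even.mpr h.add_one), if_pos h]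

@[simp] lemma pd_one : pd 1 = 1 := by simpa using pd_odd 0

lemma pd_odd_eq_iff {a b : ℕ} : pd (2 * a + 1) = pd (2 * b + 1) ↔ pd a = pd b := by
  rw [pd_odd, pd_odd]
  rcases pd_zero_or_one a with h | h <;> rcases pd_zero_or_one b with h' | h' <;>
    simp [h, h']

/-! ### The projection lemma -/

lemma proj (j m : ℕ) : IsLocalPeriodAt pd j (2 * m) ↔ IsLocalPeriodAt pd (j / 2) m := by
  constructor
  · rintro ⟨h1, H⟩
    refine ⟨by omega, ?_⟩
    rcases H with ⟨h2, hw⟩ | ⟨h2, hw⟩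
    · left
      refine ⟨by omega, ?_⟩
      intro k hk
      have h1' := hw (2 * k + 1 - j % 2) (by omega)
      have e1 : j + (2 * k + 1 - j % 2) = 2 * (j / 2 + k) + 1 := by omega
      have e2 : j - 2 * m + (2 * k + 1 - j % 2) = 2 * (j / 2 - m + k) + 1 := by omega
      rw [e1, e2] at h1'
      exact pd_odd_eq_iff.mp h1'
    · right
      refine ⟨by omega, ?_⟩
      intro k hk
      have h1' := hw (2 * k + 1) (by omega)
      rw [show 2 * m + (2 * k + 1) = 2 * (m + k) + 1 by ring] at h1'
      exact pd_odd_eq_iff.mp h1'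
  · rintro ⟨h1, H⟩
    refine ⟨by omega, ?_⟩
    rcases H with ⟨h2, hw⟩ | ⟨h2, hw⟩
    · left
      refine ⟨by omega, ?_⟩
      intro k hk
      rcases Nat.even_or_odd (j + k) with he | ho
      · obtain ⟨a, ha⟩ := he
        rw [show j + k = 2 * a by omega, show j - 2 * m + k = 2 * (a - m) by omega,
            pd_two_mul, pd_two_mul]
      · obtain ⟨a, ha⟩ := ho
        have hk' := hw (a - j / 2) (by omega)
        have e1 : j / 2 + (a - j / 2) = a := by omega
        have e2 : j / 2 - m + (a - j / 2) = a - m := by omega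
        rw [e1, e2] at hk'
        rw [show j + k = 2 * a + 1 by omega, show j - 2 * m + k = 2 * (a - m) + 1 by omega,
            pd_odd, pd_odd, hk']
    · right
      refine ⟨by omega, ?_⟩
      intro k hk
      rcases Nat.even_or_odd k with he | ho
      · obtain ⟨y, hy⟩ := he
        rw [show k = 2 * y by omega, show 2 * m + 2 * y = 2 * (m + y) by ring,
            pd_two_mul, pd_two_mul]
      · obtain ⟨y, hy⟩ := ho
        have hk' := hw y (by omega)
        rw [show k = 2 * y + 1 by omega, show 2 * m + (2 * y + 1) = 2 * (m + y) + 1 by ring,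
            pd_odd, pd_odd, hk']

/-! ### Odd local periods -/

lemma odd_lp (j n : ℕ) (hj : 2 ≤ j) (hodd : Odd n) (h : IsLocalPeriodAt pd j n) : n = 1 := by
  by_contra hne
  obtain ⟨h1, H⟩ := h
  have hn3 : 3 ≤ n := by obtain ⟨t, ht⟩ := hodd; omega
  obtain ⟨t0, ht0⟩ := hodd
  rcases H with ⟨h2, hw⟩ | ⟨h2, hw⟩
  · have key : ∀ x, Odd x → j - n ≤ x → x < j + n → pd x = 0 := by
      intro x hx hx1 hx2
      obtain ⟨t, ht⟩ := hx
      rcases lt_or_ge x j with hlt | hge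
      · have hk := hw (x - (j - n)) (by omega)
        have e1 : j - n + (x - (j - n)) = x := by omega
        have e2 : j + (x - (j - n)) = x + n := by omega
        rw [e1, e2] at hk
        rw [← hk, show x + n = 2 * ((x + n) / 2) by omega, pd_two_mul]
      · have hk := hw (x - j) (by omega)
        have e1 : j + (x - j) = x := by omega
        have e2 : j - n + (x - j) = x - n := by omega
        rw [e1, e2] at hk
        rw [hk, show x - n = 2 * ((x - n) / 2) by omega, pd_two_mul]
    have p1 : pd (2 * ((j - n) / 2) + 1) = 0 :=
      key _ ⟨(j - n) / 2, by ring⟩ (by omega) (by omega)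
    have p2 : pd (2 * ((j - n) / 2 + 1) + 1) = 0 :=
      key _ ⟨(j - n) / 2 + 1, by ring⟩ (by omega) (by omega)
    rw [pd_odd] at p1 p2
    have hy1 := pd_zero_or_one ((j - n) / 2)
    have hy2 := pd_zero_or_one ((j - n) / 2 + 1)
    rcases Nat.even_or_odd ((j - n) / 2) with he | ho
    · obtain ⟨t, ht⟩ := he
      have h0 : pd ((j - n) / 2) = 0 := by
        rw [show (j - n) / 2 = 2 * t by omega]; exact pd_two_mul t
      omega
    · obtain ⟨t, ht⟩ := ho
      have h0 : pd ((j - n) / 2 + 1) = 0 := by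
        rw [show (j - n) / 2 + 1 = 2 * (t + 1) by omega]; exact pd_two_mul (t + 1)
      omega
  · have hk := hw 1 (by omega)
    have h1' : pd 1 = 1 := pd_one
    have h2' : pd (n + 1) = 0 := by
      rw [show n + 1 = 2 * (t0 + 1) by omega]; exact pd_two_mul (t0 + 1)
    omega

/-! ### Values of the periodicity function -/

lemma lp_nonempty (j : ℕ) : {n | IsLocalPeriodAt pd j n}.Nonempty := by
  induction j using Nat.strong_induction_on with
  | _ j ih =>
    rcases Nat.eq_zero_or_pos j with rfl | hj
    · exact ⟨1, le_refl 1, Or.inr ⟨zero_lt_one, fun k hk => absurd hk (Nat.not_lt_zero k)⟩⟩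
    · obtain ⟨n, hn⟩ := ih (j / 2) (by omega)
      exact ⟨2 * n, (proj j n).mpr hn⟩

lemma perFn_eq (j n : ℕ) (hmem : IsLocalPeriodAt pd j n)
    (hmin : ∀ m, IsLocalPeriodAt pd j m → n ≤ m) : perFn pd j = n := by
  unfold perFn
  have hne : {m | IsLocalPeriodAt pd j m}.Nonempty := ⟨n, hmem⟩
  exact le_antisymm (Nat.sInf_le hmem) (hmin _ (Nat.sInf_mem hne))

lemma perFn_pd_zero : perFn pd 0 = 1 := by
  apply perFn_eq
  · exact ⟨le_refl 1, Or.inr ⟨zero_lt_one, fun k hk => absurd hk (Nat.not_lt_zero k)⟩⟩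
  · exact fun m hm => hm.1

lemma perFn_pd_one : perFn pd 1 = 2 := by
  apply perFn_eq
  · refine ⟨by omega, Or.inr ⟨by omega, fun k hk => ?_⟩⟩
    have hk0 : k = 0 := by omega
    subst hk0
    rw [show 2 + 0 = 2 * 1 by ring, pd_two_mul, pd_zero]
  · intro m hm
    obtain ⟨hm1, H⟩ := hm
    by_contra hlt
    have hm1' : m = 1 := by omega
    subst hm1'
    rcases H with ⟨_, hw⟩ | ⟨h2, _⟩
    · have := hw 0 (by omega)
      simp at this
    · omega

lemma perFn_pd_rec (j : ℕ) (hj : 2 ≤ j) :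
    perFn pd j = if pd j = pd (j - 1) then 1 else 2 * perFn pd (j / 2) := by
  split_ifs with h
  · apply perFn_eq
    · refine ⟨le_refl 1, Or.inl ⟨by omega, fun k hk => ?_⟩⟩
      have hk0 : k = 0 := by omega
      subst hk0
      simpa using h
    · exact fun m hm => hm.1
  · have hm0 : IsLocalPeriodAt pd (j / 2) (perFn pd (j / 2)) :=
      Nat.sInf_mem (lp_nonempty (j / 2))
    apply perFn_eq
    · exact (proj j _).mpr hm0
    · intro n hn
      rcases Nat.even_or_odd n with he | ho
      · obtain ⟨t, ht⟩ := he
        have h2 : IsLocalPeriodAt pd j (2 * t) := by rwa [show 2 * t = n by omega]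
        have h4 : perFn pd (j / 2) ≤ t := Nat.sInf_le ((proj j t).mp h2)
        omega
      · exfalso
        have h1 := odd_lp j n hj ho hn
        subst h1
        obtain ⟨_, H⟩ := hn
        rcases H with ⟨_, hw⟩ | ⟨h2, _⟩
        · have := hw 0 (by omega)
          simp only [add_zero] at this
          exact h this
        · omega

lemma pR (i : ℕ) : perFn pd (2 * i + 1) = if pd i = 1 then 1 else 2 * perFn pd i := by
  rcases Nat.eq_zero_or_pos i with rfl | hi
  · norm_num [perFn_pd_one, perFn_pd_zero]
  · rw [perFn_pd_rec _ (by omega), show 2 * i + 1 - 1 = 2 * i by omega, pd_odd, pd_two_mul,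
      show (2 * i + 1) / 2 = i by omega]
    rcases pd_zero_or_one i with h | h <;> simp [h]

lemma pL (i : ℕ) (hi : 1 ≤ i) :
    perFn pd (2 * i) = if pd (i - 1) = 1 then 1 else 2 * perFn pd i := by
  rw [perFn_pd_rec _ (by omega), pd_two_mul, show 2 * i - 1 = 2 * (i - 1) + 1 by omega,
    pd_odd, show (2 * i) / 2 = i by omega]
  rcases pd_zero_or_one (i - 1) with h | h <;> simp [h]

/-! ### Summation -/

noncomputable def Sn (n : ℕ) : ℕ := ∑ j ∈ Finset.range n, perFn pd j
noncomputable def An (n : ℕ) : ℕ := ∑ i ∈ Finset.range n, perFn pd i * pd i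
noncomputable def Bn (n : ℕ) : ℕ := ∑ i ∈ Finset.range n, perFn pd i * pd (i - 1)
def Cn (n : ℕ) : ℕ := ∑ i ∈ Finset.range n, pd i
def Mn (n : ℕ) : ℕ := ∑ i ∈ Finset.range n, pd (i - 1)

lemma termC (i : ℕ) : pd (2 * i) + pd (2 * i + 1) + pd i = 1 := by
  rw [pd_two_mul, pd_odd]
  have := pd_zero_or_one i
  omega

lemma termA (i : ℕ) :
    perFn pd (2 * i) * pd (2 * i) + perFn pd (2 * i + 1) * pd (2 * i + 1)
      + 2 * (perFn pd i * pd i) = 2 * perFn pd i := by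
  rw [pd_two_mul, pd_odd, pR i]
  rcases pd_zero_or_one i with h | h <;> simp [h] <;> ring

lemma termB (i : ℕ) (hi : 1 ≤ i) :
    perFn pd (2 * i) * pd (2 * i - 1) + perFn pd (2 * i + 1) * pd (2 * i)
      + 2 * (perFn pd i * pd (i - 1)) = 2 * perFn pd i := by
  rw [pd_two_mul, show 2 * i - 1 = 2 * (i - 1) + 1 by omega, pd_odd, pL i hi]
  rcases pd_zero_or_one (i - 1) with h | h <;> simp [h] <;> ring

lemma termS (i : ℕ) (hi : 1 ≤ i) :
    perFn pd (2 * i) + perFn pd (2 * i + 1) + 2 * (perFn pd i * pd (i - 1))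
      + 2 * (perFn pd i * pd i) = pd (i - 1) + pd i + 4 * perFn pd i := by
  rw [pL i hi, pR i]
  rcases pd_zero_or_one i with h | h <;> rcases pd_zero_or_one (i - 1) with h' | h' <;>
    simp [h, h'] <;> ring

lemma recC (n : ℕ) : Cn (2 * n) + Cn n = n := by
  induction n with
  | zero => simp [Cn]
  | succ n ih =>
    unfold Cn at *
    rw [show 2 * (n + 1) = 2 * n + 1 + 1 by ring, Finset.sum_range_succ,
      Finset.sum_range_succ, Finset.sum_range_succ]
    have := termC n
    omega

lemma recA (n : ℕ) : An (2 * n) + 2 * An n = 2 * Sn n := by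
  induction n with
  | zero => simp [An, Sn]
  | succ n ih =>
    unfold An Sn at *
    rw [show 2 * (n + 1) = 2 * n + 1 + 1 by ring, Finset.sum_range_succ,
      Finset.sum_range_succ, Finset.sum_range_succ, Finset.sum_range_succ]
    have := termA n
    linarith

lemma recB (n : ℕ) (hn : 1 ≤ n) : Bn (2 * n) + 2 * Bn n + 2 = 2 * Sn n := by
  induction n, hn using Nat.le_induction with
  | base =>
    simp [Bn, Sn, Finset.sum_range_succ, perFn_pd_zero, perFn_pd_one]
  | succ n hn ih =>
    unfold Bn Sn at *
    rw [show 2 * (n + 1) = 2 * n + 1 + 1 by ring, Finset.sum_range_succ,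
      Finset.sum_range_succ, Finset.sum_range_succ, Finset.sum_range_succ]
    simp only [Nat.add_sub_cancel]
    have := termB n hn
    linarith

lemma recS (n : ℕ) (hn : 1 ≤ n) :
    Sn (2 * n) + 2 * Bn n + 2 * An n + 1 = Mn n + Cn n + 4 * Sn n := by
  induction n, hn using Nat.le_induction with
  | base =>
    simp [Sn, An, Bn, Cn, Mn, Finset.sum_range_succ, perFn_pd_zero, perFn_pd_one]
  | succ n hn ih =>
    unfold Sn An Bn Cn Mn at *
    rw [show 2 * (n + 1) = 2 * n + 1 + 1 by ring, Finset.sum_range_succ,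
      Finset.sum_range_succ, Finset.sum_range_succ, Finset.sum_range_succ,
      Finset.sum_range_succ, Finset.sum_range_succ, Finset.sum_range_succ]
    have := termS n hn
    linarith

lemma recM (n : ℕ) (hn : 1 ≤ n) : Mn n + pd (n - 1) = Cn n := by
  unfold Mn Cn
  obtain ⟨m, rfl⟩ : ∃ m, n = m + 1 := ⟨n - 1, by omega⟩
  rw [Finset.sum_range_succ' (fun i => pd (i - 1)) m, Finset.sum_range_succ pd m]
  simp

lemma pd_pow_sub_one (l : ℕ) : pd (2 ^ l - 1) = if Odd l then 1 else 0 := by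
  have h1 : 0 < 2 ^ l := pow_pos (by norm_num) l
  unfold pd
  rw [show 2 ^ l - 1 + 1 = 2 ^ l by omega, Nat.Prime.factorization_pow Nat.prime_two]
  simp

/-! ### The main induction -/

lemma main_formulas (l : ℕ) :
    ((Sn (2 ^ l) : ℝ) = (5 / 9 + (2 / 3 : ℝ) * l) * 2 ^ l + 1 / 2 - (1 / 18 : ℝ) * (-1) ^ l) ∧
    ((An (2 ^ l) : ℝ) = (1 / 9 + (l : ℝ) / 3) * 2 ^ l + 1 / 3 - (1 / 9) * (-1) ^ l
        - (1 / 3) * (-2) ^ l) ∧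
    ((Bn (2 ^ l) : ℝ) = (1 / 9 + (l : ℝ) / 3) * 2 ^ l - 1 / 3 - (1 / 9) * (-1) ^ l
        + (1 / 3) * (-2) ^ l) ∧
    ((Cn (2 ^ l) : ℝ) = ((2 : ℝ) ^ l - (-1) ^ l) / 3) := by
  induction l with
  | zero =>
    have h1 : Sn 1 = 1 := by simp [Sn, perFn_pd_zero]
    have h2 : An 1 = 0 := by simp [An]
    have h3 : Bn 1 = 0 := by simp [Bn]
    have h4 : Cn 1 = 0 := by simp [Cn]
    rw [pow_zero]
    rw [h1, h2, h3, h4]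
    norm_num
  | succ l ih =>
    obtain ⟨hS, hA, hB, hC⟩ := ih
    have hpos : 1 ≤ 2 ^ l := Nat.one_le_two_pow
    have h2p : (2 : ℕ) ^ (l + 1) = 2 * 2 ^ l := by ring
    have hpdR : (pd (2 ^ l - 1) : ℝ) = (1 - (-1 : ℝ) ^ l) / 2 := by
      rw [pd_pow_sub_one]
      rcases Nat.even_or_odd l with h | h
      · rw [if_neg (Nat.not_odd_iff_even.mpr h), h.neg_one_pow]
        norm_num
      · rw [if_pos h, h.neg_one_pow]
        norm_num
    have cA : (An (2 ^ (l + 1)) : ℝ) + 2 * An (2 ^ l) = 2 * Sn (2 ^ l) := by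
      have := recA (2 ^ l); rw [← h2p] at this; exact_mod_cast this
    have cB : (Bn (2 ^ (l + 1)) : ℝ) + 2 * Bn (2 ^ l) + 2 = 2 * Sn (2 ^ l) := by
      have := recB (2 ^ l) hpos; rw [← h2p] at this; exact_mod_cast this
    have cC : (Cn (2 ^ (l + 1)) : ℝ) + Cn (2 ^ l) = 2 ^ l := by
      have := recC (2 ^ l); rw [← h2p] at this; exact_mod_cast this
    have cS : (Sn (2 ^ (l + 1)) : ℝ) + 2 * Bn (2 ^ l) + 2 * An (2 ^ l) + 1
        = Mn (2 ^ l) + Cn (2 ^ l) + 4 * Sn (2 ^ l) := by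
      have := recS (2 ^ l) hpos; rw [← h2p] at this; exact_mod_cast this
    have cM : (Mn (2 ^ l) : ℝ) + pd (2 ^ l - 1) = Cn (2 ^ l) := by
      exact_mod_cast recM (2 ^ l) hpos
    rw [hpdR] at cM
    refine ⟨?_, ?_, ?_, ?_⟩
    · have : (Sn (2 ^ (l + 1)) : ℝ)
          = (Mn (2 ^ l) : ℝ) + ((2 : ℝ) ^ l - (-1) ^ l) / 3
            + 4 * ((5 / 9 + (2 / 3 : ℝ) * l) * 2 ^ l + 1 / 2 - (1 / 18 : ℝ) * (-1) ^ l)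
            - 2 * ((1 / 9 + (l : ℝ) / 3) * 2 ^ l - 1 / 3 - (1 / 9) * (-1) ^ l
              + (1 / 3) * (-2) ^ l)
            - 2 * ((1 / 9 + (l : ℝ) / 3) * 2 ^ l + 1 / 3 - (1 / 9) * (-1) ^ l
              - (1 / 3) * (-2) ^ l) - 1 := by linarith
      rw [this]
      have hM : (Mn (2 ^ l) : ℝ)
          = ((2 : ℝ) ^ l - (-1) ^ l) / 3 - (1 - (-1 : ℝ) ^ l) / 2 := by linarith
      rw [hM]
      push_cast
      ring
    · have : (An (2 ^ (l + 1)) : ℝ)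
          = 2 * ((5 / 9 + (2 / 3 : ℝ) * l) * 2 ^ l + 1 / 2 - (1 / 18 : ℝ) * (-1) ^ l)
            - 2 * ((1 / 9 + (l : ℝ) / 3) * 2 ^ l + 1 / 3 - (1 / 9) * (-1) ^ l
              - (1 / 3) * (-2) ^ l) := by linarith
      rw [this]
      push_cast
      ring
    · have : (Bn (2 ^ (l + 1)) : ℝ)
          = 2 * ((5 / 9 + (2 / 3 : ℝ) * l) * 2 ^ l + 1 / 2 - (1 / 18 : ℝ) * (-1) ^ l)
            - 2 * ((1 / 9 + (l : ℝ) / 3) * 2 ^ l - 1 / 3 - (1 / 9) * (-1) ^ l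
              + (1 / 3) * (-2) ^ l) - 2 := by linarith
      rw [this]
      push_cast
      ring
    · have : (Cn (2 ^ (l + 1)) : ℝ)
          = 2 ^ l - ((2 : ℝ) ^ l - (-1) ^ l) / 3 := by linarith
      rw [this]
      push_cast
      ring

theorem pd_sumFn_pow_two (l : ℕ) :
    (sumFn pd (2 ^ l) : ℝ) =
      (5 / 9 + (2 / 3 : ℝ) * l) * 2 ^ l + 1 / 2 - (1 / 18 : ℝ) * (-1) ^ l := by
  exact (main_formulas l).1
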